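/- Let s be a quasi-reflexive Q-relation on X (s(x,y) ≤ s(x,x) for all x,y). Then s is a quasi²-metric (i.e., additionally transitive: s(x,z) ⊗ s(z,y) ≤ s(x,y)) if and only if there exists a quasi-metric q with s ≤ q pointwise and s(x,z) ⊗ q(z,y) ≤ s(x,y) for all x,y,z. -/

import Mathlib

open Quantale in
theorem quasi2_iff_exists_quasiMetric {X : Type*} {Q : Type*}
    [CommMonoid Q] [CompleteLattice Q] [IsQuantale Q]
    (hunit : (1 : Q) = ⊤) (s : X → X → Q)
    (hqr : ∀ x y, s x y ≤ s x x) :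
    (∀ x y z, s x z * s z y ≤ s x y) ↔
      (∃ q : X → X → Q,
        (∀ x, q x x = ⊤) ∧
        (∀ x y z, q x z * q z y ≤ q x y) ∧
        (∀ x y, s x y ≤ q x y) ∧
        (∀ x y z, s x z * q z y ≤ s x y)) := by
  constructor
  · intro htrans
    refine ⟨fun z y => ⨅ x, (s x z ⇨ᵣ s x y), ?_, ?_, ?_, ?_⟩
    · intro x
      refine le_antisymm le_top (le_iInf fun w => ?_)
      rw [rightMulResiduation_le_iff_mul_le, ← hunit, mul_one]
    · intro x y z
      refine le_iInf fun w => ?_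
      rw [rightMulResiduation_le_iff_mul_le, ← mul_assoc]
      calc s w x * (⨅ u, s u x ⇨ᵣ s u z) * ⨅ u, s u z ⇨ᵣ s u y
          ≤ s w z * ⨅ u, s u z ⇨ᵣ s u y := by
            apply mul_le_mul_left
            rw [← rightMulResiduation_le_iff_mul_le]
            exact iInf_le _ w
        _ ≤ s w y := by
            rw [← rightMulResiduation_le_iff_mul_le]
            exact iInf_le _ w
    · intro x y
      exact le_iInf fun w => by
        rw [rightMulResiduation_le_iff_mul_le]; exact htrans w y x
    · intro x y z
      rw [← rightMulResiduation_le_iff_mul_le]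
      exact iInf_le _ x
  · rintro ⟨q, _, _, hsq, hcomp⟩ x y z
    exact le_trans (mul_le_mul_right (hsq z y) _) (hcomp x y z)
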